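/- Let G0(x,y) = -(3x^4 + 10x^2y^2 + 3y^4) and G1(x,y) = 4(x^2 - y^2)^2. If a, b are coprime integers, then gcd(G0(a,b), G1(a,b)) = 1 when a and b have opposite parity, and gcd(G0(a,b), G1(a,b)) = 16 when a and b are both odd. -/

import Mathlib

/-- The binary quartic form `G0(x,y) = -(3x⁴ + 10x²y² + 3y⁴)`. -/
def G0 (x y : ℤ) : ℤ := -(3*x^4 + 10*x^2*y^2 + 3*y^4)

/-- The binary quartic form `G1(x,y) = 4(x² - y²)²`. -/
def G1 (x y : ℤ) : ℤ := 4*(x^2 - y^2)^2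

/-- Any prime dividing both `G0 a b` and `G1 a b` for coprime `a b` must be 2. -/
lemma key_prime (a b : ℤ) (hab : Int.gcd a b = 1) {p : ℕ} (hp : p.Prime)
    (h0 : (p:ℤ) ∣ G0 a b) (h1 : (p:ℤ) ∣ G1 a b) : p = 2 := by
  by_contra hne
  have hpZ : Prime (p:ℤ) := by rw [Int.prime_iff_natAbs_prime]; simpa using hp
  have hp2 : ¬ (p:ℤ) ∣ 2 := by
    intro h
    have h2 : p ∣ 2 := by exact_mod_cast h
    exact hne ((Nat.prime_dvd_prime_iff_eq hp Nat.prime_two).mp h2)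
  -- p divides 64*(a*b)^2
  have hcomb : (p:ℤ) ∣ 64*(a*b)^2 := by
    have heq : 64*(a*b)^2 = -(4*G0 a b + 3*G1 a b) := by unfold G0 G1; ring
    rw [heq]
    exact (dvd_add (h0.mul_left 4) (h1.mul_left 3)).neg_right
  have hab' : (p:ℤ) ∣ a*b := by
    rcases hpZ.dvd_mul.mp hcomb with h | h
    · exact absurd (hpZ.dvd_of_dvd_pow (show (p:ℤ) ∣ 2^6 by norm_num [h])) hp2
    · exact hpZ.dvd_of_dvd_pow h
  have hdiff : (p:ℤ) ∣ a^2 - b^2 := by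
    have h1' : (p:ℤ) ∣ 4*(a^2-b^2)^2 := by unfold G1 at h1; exact h1
    rcases hpZ.dvd_mul.mp h1' with h | h
    · exact absurd (hpZ.dvd_of_dvd_pow (show (p:ℤ) ∣ 2^2 by norm_num [h])) hp2
    · exact hpZ.dvd_of_dvd_pow h
  have hboth : (p:ℤ) ∣ a ∧ (p:ℤ) ∣ b := by
    rcases hpZ.dvd_mul.mp hab' with h | h
    · refine ⟨h, hpZ.dvd_of_dvd_pow (n := 2) ?_⟩
      have : b^2 = a*a - (a^2 - b^2) := by ring
      rw [this]; exact dvd_sub (h.mul_right a) hdiff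
    · refine ⟨hpZ.dvd_of_dvd_pow (n := 2) ?_, h⟩
      have : a^2 = b*b + (a^2 - b^2) := by ring
      rw [this]; exact dvd_add (h.mul_right b) hdiff
  have h1' : (p:ℤ) ∣ (1:ℤ) := by
    have := Int.dvd_coe_gcd hboth.1 hboth.2
    rwa [hab, Nat.cast_one] at this
  have hp1 : p ∣ 1 := by exact_mod_cast h1'
  have := Nat.le_of_dvd one_pos hp1
  have := hp.one_lt
  omega

theorem stmt0 (a b : ℤ) (hab : Int.gcd a b = 1) :
    (((Even a ∧ Odd b) ∨ (Odd a ∧ Even b)) → Int.gcd (G0 a b) (G1 a b) = 1) ∧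
    ((Odd a ∧ Odd b) → Int.gcd (G0 a b) (G1 a b) = 16) := by
  constructor
  · intro h
    have hodd : Odd (G0 a b) := by
      unfold G0
      rcases h with ⟨⟨k, hk⟩, ⟨j, hj⟩⟩ | ⟨⟨j, hj⟩, ⟨k, hk⟩⟩
      · subst hk hj
        exact ⟨-(24*k^4+80*k^2*j^2+80*k^2*j+20*k^2+24*j^4+48*j^3+36*j^2+12*j+2), by ring⟩
      · subst hk hj
        exact ⟨-(24*k^4+80*k^2*j^2+80*k^2*j+20*k^2+24*j^4+48*j^3+36*j^2+12*j+2), by ring⟩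
    by_contra hne
    obtain ⟨p, hp, hpd⟩ := Nat.exists_prime_and_dvd hne
    have h0 : (p:ℤ) ∣ G0 a b := (Int.natCast_dvd_natCast.mpr hpd).trans (Int.gcd_dvd_left _ _)
    have h1 : (p:ℤ) ∣ G1 a b := (Int.natCast_dvd_natCast.mpr hpd).trans (Int.gcd_dvd_right _ _)
    have hp2 := key_prime a b hab hp h0 h1
    subst hp2
    obtain ⟨c, hc⟩ := hodd
    rw [hc] at h0
    omega
  · rintro ⟨⟨k, hk⟩, ⟨j, hj⟩⟩
    have key32 : ∀ u v : ZMod 32,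
        -(3*(2*u+1)^4+10*(2*u+1)^2*(2*v+1)^2+3*(2*v+1)^4) - 16 = 0 := by decide
    have h32 : (32:ℤ) ∣ G0 a b - 16 := by
      have hz : ((G0 a b - 16 : ℤ) : ZMod 32) = 0 := by
        subst hk hj; unfold G0; push_cast
        linear_combination key32 (k : ZMod 32) (j : ZMod 32)
      rwa [ZMod.intCast_zmod_eq_zero_iff_dvd] at hz
    obtain ⟨t, ht⟩ := h32
    have hG0 : G0 a b = 16*(2*t+1) := by linarith
    have h16G0 : (16:ℤ) ∣ G0 a b := ⟨2*t+1, hG0⟩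
    have h16G1 : (16:ℤ) ∣ G1 a b := ⟨4*((k-j)*(k+j+1))^2, by subst hk hj; unfold G1; ring⟩
    have h16d : 16 ∣ Int.gcd (G0 a b) (G1 a b) := by
      exact_mod_cast Int.dvd_coe_gcd h16G0 h16G1
    set d := Int.gcd (G0 a b) (G1 a b) with hd
    have hdvd0 : (d:ℤ) ∣ G0 a b := Int.gcd_dvd_left _ _
    have hdvd1 : (d:ℤ) ∣ G1 a b := Int.gcd_dvd_right _ _
    have hcop : Nat.Coprime d (2*t+1).natAbs := by
      rw [Nat.coprime_iff_gcd_eq_one]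
      by_contra hne
      obtain ⟨p, hp, hpd⟩ := Nat.exists_prime_and_dvd hne
      have hpd' : p ∣ d := hpd.trans (Nat.gcd_dvd_left _ _)
      have hpt : p ∣ (2*t+1).natAbs := hpd.trans (Nat.gcd_dvd_right _ _)
      have hp2 : p = 2 := key_prime a b hab hp
        ((Int.natCast_dvd_natCast.mpr hpd').trans hdvd0)
        ((Int.natCast_dvd_natCast.mpr hpd').trans hdvd1)
      subst hp2
      have h2t : (2:ℤ) ∣ 2*t+1 := Int.natAbs_dvd_natAbs.mp hpt
      omega
    have hdle : d ∣ 16 := by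
      have hmul : d ∣ 16 * (2*t+1).natAbs := by
        have := Int.natAbs_dvd_natAbs.mpr hdvd0
        simpa [hG0, Int.natAbs_mul] using this
      exact hcop.dvd_of_dvd_mul_right hmul
    exact Nat.dvd_antisymm hdle h16d
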